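/- Let A = (a_{i,l}) be a j×j real matrix that is symmetric, has a_{i,i} = 1 and 0 ≤ a_{i,l} ≤ 1 - η for some η > 0 whenever i ≠ l, and satisfies the ultrametric inequality a_{i,l} ≥ min(a_{l,p}, a_{i,p}) for all pairwise distinct i, l, p. Then A is invertible. -/

import Mathlib

/-- Membership in the class `M_j` of ultrametric matrices from the paper:
symmetric, unit diagonal, off-diagonal entries in `[0, 1-η]`, and
the ultrametric inequality `a i l ≥ min (a l p) (a i p)` for pairwise distinct indices. -/
def MemUltra (η : ℝ) {ι : Type*} [Fintype ι] [DecidableEq ι] (A : Matrix ι ι ℝ) : Prop :=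
  A.IsSymm ∧ (∀ i, A i i = 1) ∧
  (∀ i l, i ≠ l → 0 ≤ A i l ∧ A i l ≤ 1 - η) ∧
  (∀ i l p, i ≠ l → l ≠ p → i ≠ p → min (A l p) (A i p) ≤ A i l)

open Matrix in
lemma memUltra_submatrix {η : ℝ} {ι κ : Type*} [Fintype ι] [DecidableEq ι]
    [Fintype κ] [DecidableEq κ] {A : Matrix ι ι ℝ} (h : MemUltra η A)
    (e : κ → ι) (he : Function.Injective e) : MemUltra η (A.submatrix e e) := by
  obtain ⟨hs, hd, ho, hu⟩ := h
  refine ⟨?_, fun i => hd (e i), fun i l hil => ho _ _ (fun hc => hil (he hc)), ?_⟩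
  · ext i l
    simpa [Matrix.submatrix, Matrix.IsSymm] using (congrFun (congrFun hs (e l)) (e i)).symm
  · intro i l p hil hlp hip
    exact hu _ _ _ (fun hc => hil (he hc)) (fun hc => hlp (he hc)) (fun hc => hip (he hc))

open Matrix in
lemma key : ∀ (n : ℕ) (ι : Type) [Fintype ι] [DecidableEq ι], ∀ {η : ℝ}, 0 < η →
    ∀ (A : Matrix ι ι ℝ), MemUltra η A → Fintype.card ι ≤ n →
    ∀ x : ι → ℝ, x ≠ 0 → 0 < x ⬝ᵥ A *ᵥ x := by
  intro n
  induction n with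
  | zero =>
    intro ι _ _ η hη A hA hcard x hx
    have : IsEmpty ι := Fintype.card_eq_zero_iff.mp (Nat.le_zero.mp hcard)
    exact absurd (funext fun i : ι => (this.false i).elim : x = 0) hx
  | succ n ih =>
    intro ι _ _ η hη A hA hcard x hx
    obtain ⟨hs, hd, ho, hu⟩ := hA
    have hsymm : ∀ i l : ι, A l i = A i l := fun i l => by
      exact congrFun (congrFun hs i) l
    -- expand the quadratic form
    have hQ : x ⬝ᵥ A *ᵥ x = ∑ i, ∑ l, x i * (A i l * x l) := by
      simp [dotProduct, Matrix.mulVec, Finset.mul_sum]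
    by_cases hpair : ∃ p : ι × ι, p.1 ≠ p.2
    · obtain ⟨q, hq⟩ := hpair
      classical
      set P : Finset (ι × ι) := Finset.univ.filter (fun p => p.1 ≠ p.2) with hPdef
      have hPne : P.Nonempty := ⟨q, by simp [hPdef, hq]⟩
      set β : ℝ := P.inf' hPne (fun p => A p.1 p.2) with hβdef
      have hβle : ∀ i l : ι, i ≠ l → β ≤ A i l := fun i l h =>
        Finset.inf'_le (fun p => A p.1 p.2) (show (i, l) ∈ P by simp [hPdef, h])
      obtain ⟨p0, hp0P, hp0⟩ := Finset.exists_mem_eq_inf' hPne (fun p => A p.1 p.2)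
      have hi0l0 : p0.1 ≠ p0.2 := by simpa [hPdef] using hp0P
      set i0 := p0.1
      set l0 := p0.2
      have hAβ : A i0 l0 = β := hp0.symm
      have hβ0 : 0 ≤ β := hAβ ▸ (ho _ _ hi0l0).1
      have hβη : β ≤ 1 - η := hAβ ▸ (ho _ _ hi0l0).2
      have h1β : (0:ℝ) < 1 - β := by linarith
      set S : Finset ι := Finset.univ.filter (fun i => i = i0 ∨ β < A i i0) with hSdef
      have hi0S : i0 ∈ S := by simp [hSdef]
      have hl0S : l0 ∉ S := by
        simp only [hSdef, Finset.mem_filter, Finset.mem_univ, true_and]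
        push_neg
        refine ⟨hi0l0.symm, ?_⟩
        rw [hsymm]
        exact hAβ.le
      -- key cross property
      have hcross : ∀ i ∈ S, ∀ l, l ∉ S → A i l = β := by
        intro i hiS l hlS
        have hlS' : l ≠ i0 ∧ A l i0 ≤ β := by
          have := hlS
          simp only [hSdef, Finset.mem_filter, Finset.mem_univ, true_and] at this
          push_neg at this
          exact ⟨this.1, this.2⟩
        have hAl : A l i0 = β := le_antisymm hlS'.2 (hβle _ _ hlS'.1)
        have hil : i ≠ l := fun h => hlS (h ▸ hiS)
        by_cases hii0 : i = i0
        · subst hii0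
          rw [← hsymm]
          exact hAl
        · have hβi : β < A i i0 := by
            rcases (Finset.mem_filter.mp hiS).2 with h | h
            · exact absurd h hii0
            · exact h
          refine le_antisymm ?_ (hβle _ _ hil)
          by_contra hc
          push_neg at hc
          have hmin : min (A i0 i) (A l i) ≤ A l i0 :=
            hu l i0 i hlS'.1 (Ne.symm hii0) (Ne.symm hil)
          have h1 : β < A i0 i := by rw [hsymm]; exact hβi
          have h2 : β < A l i := by rw [hsymm]; exact hc
          rw [hAl] at hmin
          have := lt_min h1 h2
          linarith
      -- the normalized matrix
      set B : Matrix ι ι ℝ := Matrix.of fun i l => (A i l - β)/(1-β) with hBdef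
      have hBentry : ∀ i l : ι, B i l = (A i l - β)/(1-β) := fun i l => rfl
      have hentry : ∀ i l : ι, A i l = β + (1-β) * B i l := by
        intro i l
        rw [hBentry]
        field_simp
        ring
      have hB : MemUltra η B := by
        refine ⟨?_, ?_, ?_, ?_⟩
        · ext i l
          simp only [Matrix.transpose_apply, hBentry]
          rw [hsymm]
        · intro i
          simp [hBentry, hd i, div_self h1β.ne']
        · intro i l hil
          constructor
          · exact div_nonneg (by linarith [hβle i l hil]) h1β.le
          · rw [hBentry i l, div_le_iff₀ h1β]
            have := (ho i l hil).2
            nlinarith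
        · intro i l p hil hlp hip
          have h := hu i l p hil hlp hip
          rcases min_le_iff.mp h with h' | h'
          · refine min_le_of_left_le ?_
            rw [hBentry, hBentry, div_le_div_iff₀ h1β h1β]
            nlinarith
          · refine min_le_of_right_le ?_
            rw [hBentry, hBentry, div_le_div_iff₀ h1β h1β]
            nlinarith
      -- sums over subtypes
      have hsub : ∀ (U : Finset ι),
          (fun i : {a // a ∈ U} => x i.1) ⬝ᵥ (B.submatrix (Subtype.val : {a // a ∈ U} → ι) (Subtype.val : {a // a ∈ U} → ι)) *ᵥ (fun i => x i.1)
            = ∑ i ∈ U, ∑ l ∈ U, x i * (B i l * x l) := by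
        intro U
        calc (fun i : {a // a ∈ U} => x i.1) ⬝ᵥ (B.submatrix (Subtype.val : {a // a ∈ U} → ι) (Subtype.val : {a // a ∈ U} → ι)) *ᵥ (fun i => x i.1)
            = ∑ i : {a // a ∈ U}, ∑ l : {a // a ∈ U}, x i.1 * (B i.1 l.1 * x l.1) := by
              simp [dotProduct, Matrix.mulVec, Finset.mul_sum, Matrix.submatrix]
          _ = ∑ i : {a // a ∈ U}, ∑ l ∈ U, x i.1 * (B i.1 l * x l) := by
              exact Finset.sum_congr rfl fun i _ => Finset.sum_coe_sort U (fun l => x i.1 * (B i.1 l * x l))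
          _ = ∑ i ∈ U, ∑ l ∈ U, x i * (B i l * x l) := Finset.sum_coe_sort U (fun i => ∑ l ∈ U, x i * (B i l * x l))
      -- positivity of block forms via induction hypothesis
      have hpos : ∀ (U : Finset ι), U.card ≤ n →
          0 ≤ ∑ i ∈ U, ∑ l ∈ U, x i * (B i l * x l) ∧
          (∀ i ∈ U, x i ≠ 0 → 0 < ∑ i ∈ U, ∑ l ∈ U, x i * (B i l * x l)) := by
        intro U hU
        by_cases hxU : (fun i : {a // a ∈ U} => x i.1) = 0
        · have hz : ∑ i ∈ U, ∑ l ∈ U, x i * (B i l * x l) = 0 := by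
            rw [← hsub U, hxU]
            simp
          exact ⟨hz.ge, fun i hi hxi => (hxi (congrFun hxU ⟨i, hi⟩)).elim⟩
        · have hc : Fintype.card {a // a ∈ U} ≤ n := by
            rw [Fintype.card_coe]; exact hU
          have := ih {a // a ∈ U} hη (B.submatrix (Subtype.val : {a // a ∈ U} → ι) (Subtype.val : {a // a ∈ U} → ι))
            (memUltra_submatrix hB Subtype.val Subtype.val_injective) hc _ hxU
          rw [hsub U] at this
          exact ⟨this.le, fun _ _ _ => this⟩
      -- sum algebra
      have sumsq : ∀ (U V : Finset ι) (c : ℝ),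
          ∑ i ∈ U, ∑ l ∈ V, x i * (c * x l) = c * ((∑ i ∈ U, x i) * (∑ l ∈ V, x l)) := by
        intro U V c
        have h1 : ∀ i : ι, ∑ l ∈ V, x i * (c * x l) = c * x i * ∑ l ∈ V, x l := by
          intro i
          rw [Finset.mul_sum]
          exact Finset.sum_congr rfl fun l _ => by ring
        simp_rw [h1]
        rw [← Finset.sum_mul, ← Finset.mul_sum]
        ring
      set T : Finset ι := Sᶜ with hTdef
      have hST : ∀ i ∈ S, ∀ l ∈ T, A i l = β := fun i hi l hl =>
        hcross i hi l (Finset.mem_compl.mp hl)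
      have hTS : ∀ i ∈ T, ∀ l ∈ S, A i l = β := fun i hi l hl => by
        rw [hsymm]; exact hcross l hl i (Finset.mem_compl.mp hi)
      set σS : ℝ := ∑ i ∈ S, x i with hσS
      set σT : ℝ := ∑ i ∈ T, x i with hσT
      set QS : ℝ := ∑ i ∈ S, ∑ l ∈ S, x i * (B i l * x l) with hQS
      set QT : ℝ := ∑ i ∈ T, ∑ l ∈ T, x i * (B i l * x l) with hQT
      have blockexp : ∀ (U : Finset ι),
          ∑ i ∈ U, ∑ l ∈ U, x i * (A i l * x l)
            = β * ((∑ i ∈ U, x i) * (∑ i ∈ U, x i)) + (1-β) * (∑ i ∈ U, ∑ l ∈ U, x i * (B i l * x l)) := by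
        intro U
        have hterm : ∀ i l : ι, x i * (A i l * x l)
            = x i * (β * x l) + (1-β) * (x i * (B i l * x l)) := by
          intro i l
          rw [hentry i l]
          ring
        simp_rw [hterm, Finset.sum_add_distrib, ← Finset.mul_sum]
        rw [← Finset.sum_mul]
        have hms : ∀ i : ι, x i * ∑ l ∈ U, B i l * x l = ∑ l ∈ U, x i * (B i l * x l) :=
          fun i => Finset.mul_sum _ _ _
        simp_rw [hms]
        ring
      have hcrossS : ∑ i ∈ S, ∑ l ∈ T, x i * (A i l * x l) = β * (σS * σT) := by
        rw [hσS, hσT, ← sumsq S T β]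
        refine Finset.sum_congr rfl fun i hi => Finset.sum_congr rfl fun l hl => ?_
        rw [hST i hi l hl]
      have hcrossT : ∑ i ∈ T, ∑ l ∈ S, x i * (A i l * x l) = β * (σT * σS) := by
        rw [hσT, hσS, ← sumsq T S β]
        refine Finset.sum_congr rfl fun i hi => Finset.sum_congr rfl fun l hl => ?_
        rw [hTS i hi l hl]
      have hsplit : x ⬝ᵥ A *ᵥ x = β * (σS + σT)^2 + (1-β) * (QS + QT) := by
        rw [hQ]
        have houter : ∀ f : ι → ℝ, ∑ i, f i = ∑ i ∈ S, f i + ∑ i ∈ T, f i := by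
          intro f
          rw [hTdef, Finset.sum_add_sum_compl]
        rw [houter]
        have hinner : ∀ g : ι → ι → ℝ, ∀ (U : Finset ι),
            ∑ i ∈ U, ∑ l, g i l = ∑ i ∈ U, ∑ l ∈ S, g i l + ∑ i ∈ U, ∑ l ∈ T, g i l := by
          intro g U
          rw [← Finset.sum_add_distrib]
          refine Finset.sum_congr rfl fun i _ => ?_
          rw [hTdef, Finset.sum_add_sum_compl]
        rw [hinner, hinner, blockexp S, blockexp T, hcrossS, hcrossT]
        rw [← hσS, ← hσT, ← hQS, ← hQT]
        ring
      -- cardinalities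
      have hScard : S.card ≤ n := by
        have : S.card < Fintype.card ι := by
          rw [← Finset.card_univ]
          exact Finset.card_lt_card (Finset.ssubset_univ_iff.mpr
            (fun h => hl0S (h ▸ Finset.mem_univ l0)))
        omega
      have hTcard : T.card ≤ n := by
        have : T.card < Fintype.card ι := by
          rw [← Finset.card_univ]
          refine Finset.card_lt_card (Finset.ssubset_univ_iff.mpr ?_)
          intro h
          have : i0 ∈ T := h ▸ Finset.mem_univ i0
          exact Finset.mem_compl.mp this hi0S
        omega
      obtain ⟨i, hxi⟩ : ∃ i, x i ≠ 0 := by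
        by_contra h; push_neg at h; exact hx (funext h)
      have hQpos : 0 < QS + QT := by
        by_cases hiS : i ∈ S
        · have h1 := (hpos S hScard).2 i hiS hxi
          have h2 := (hpos T hTcard).1
          rw [← hQS] at h1
          rw [← hQT] at h2
          linarith
        · have h1 := (hpos T hTcard).2 i (Finset.mem_compl.mpr hiS) hxi
          have h2 := (hpos S hScard).1
          rw [← hQT] at h1
          rw [← hQS] at h2
          linarith
      rw [hsplit]
      have hsq : 0 ≤ β * (σS + σT)^2 := mul_nonneg hβ0 (sq_nonneg _)
      nlinarith
    · -- subsingleton case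
      push_neg at hpair
      obtain ⟨i, hxi⟩ : ∃ i, x i ≠ 0 := by
        by_contra h; push_neg at h; exact hx (funext h)
      have huniv : (Finset.univ : Finset ι) = {i} := by
        ext l; simpa using hpair (l, i)
      rw [hQ, huniv]
      simp [hd i]
      positivity

/-- every matrix in `M_j` is invertible. -/
theorem ultrametric_matrix_invertible {η : ℝ} (hη : 0 < η) {j : ℕ}
    (A : Matrix (Fin j) (Fin j) ℝ) (hA : MemUltra η A) :
    IsUnit A.det := by
  have hpd : A.PosDef := by
    refine Matrix.PosDef.of_dotProduct_mulVec_pos (Matrix.isHermitian_iff_isSymm.mpr hA.1) fun x hx => ?_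
    have := key (Fintype.card (Fin j)) (Fin j) hη A hA le_rfl x hx
    simpa using this
  exact isUnit_iff_ne_zero.mpr hpd.det_pos.ne'
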